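/- For 1-vectors u_1,…,u_k and v_1,…,v_k in a Clifford algebra, the scalar product of the blades satisfies (u_1 ∧ u_2 ∧ ⋯ ∧ u_k) ∗ (v_k ∧ v_{k−1} ∧ ⋯ ∧ v_1) = det[u_i ∗ v_j]_{1≤i,j≤k}. -/

import Mathlib

variable {K V : Type*} [Field K] [AddCommGroup V] [Module K V]

/-- The outer product of a vector with an arbitrary multivector:
`v ∧ x := ½(v x + x* v)`. -/
noncomputable def wedgeVec (Q : QuadraticForm K V) (v : V) (x : CliffordAlgebra Q) :
    CliffordAlgebra Q :=
  ((2 : K)⁻¹) • (CliffordAlgebra.ι Q v * x + CliffordAlgebra.involute x * CliffordAlgebra.ι Q v)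

/-- The blade `a_1 ∧ a_2 ∧ ⋯ ∧ a_m` built from a list of vectors. -/
noncomputable def wedgeList (Q : QuadraticForm K V) (l : List V) : CliffordAlgebra Q :=
  l.foldr (fun v x => wedgeVec Q v x) 1

/-- The scalar (grade-0) part `⟨x⟩₀` of a multivector, obtained via the canonical
linear equivalence with the exterior algebra. -/
noncomputable def scalarPart (Q : QuadraticForm K V) [Invertible (2 : K)]
    (x : CliffordAlgebra Q) : K :=
  ExteriorAlgebra.algebraMapInv (CliffordAlgebra.equivExterior Q x)

set_option linter.unusedSectionVars false

namespace BladeDet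

open CliffordAlgebra

variable (Q : QuadraticForm K V)

theorem wedgeList_cons (a : V) (l : List V) :
    wedgeList Q (a :: l) = wedgeVec Q a (wedgeList Q l) := rfl

theorem wedgeList_nil : wedgeList Q ([] : List V) = 1 := rfl

/-- `wedgeVec` as a linear map in its second argument. -/
noncomputable def wedgeVecL (v : V) : CliffordAlgebra Q →ₗ[K] CliffordAlgebra Q where
  toFun x := wedgeVec Q v x
  map_add' x y := by
    simp only [wedgeVec, mul_add, add_mul, map_add, ← smul_add]
    congr 1
    abel
  map_smul' r x := by
    simp only [wedgeVec, mul_smul_comm, smul_mul_assoc, map_smul, RingHom.id_apply]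
    rw [← smul_add, smul_comm]

theorem wedgeVecL_apply (v : V) (x : CliffordAlgebra Q) :
    wedgeVecL Q v x = wedgeVec Q v x := rfl

theorem contract_mul (d : Module.Dual K V) (x y : CliffordAlgebra Q) :
    contractLeft d (x * y) =
      contractLeft d x * y + involute x * contractLeft d y := by
  induction x using CliffordAlgebra.left_induction with
  | algebraMap r =>
    rw [contractLeft_algebraMap_mul, contractLeft_algebraMap, zero_mul, zero_add,
      AlgHom.commutes]
  | add x₁ x₂ h₁ h₂ =>
    simp only [add_mul, map_add, h₁, h₂]
    abel
  | ι_mul x m h =>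
    simp only [mul_assoc, contractLeft_ι_mul, h, map_mul, involute_ι, mul_add, mul_sub,
      sub_mul, add_mul, smul_mul_assoc, neg_mul, mul_assoc]
    abel

section Char
variable [Invertible (2 : K)]

theorem assoc_apply (v m : V) :
    QuadraticMap.associated (R := K) Q v m = (2 : K)⁻¹ * QuadraticMap.polar Q v m := by
  have h := QuadraticMap.two_nsmul_associated K (Q := Q)
  have h2 := DFunLike.congr_fun (DFunLike.congr_fun h v) m
  simp only [LinearMap.smul_apply, QuadraticMap.polarBilin_apply_apply] at h2
  have h2' : (2 : K) * QuadraticMap.associated (R := K) Q v m = QuadraticMap.polar Q v m := by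
    rw [← h2, two_nsmul, two_mul]
  have two_ne : (2 : K) ≠ 0 := Invertible.ne_zero 2
  rw [← h2', ← mul_assoc, inv_mul_cancel₀ two_ne, one_mul]

theorem contract_assoc (v : V) (x : CliffordAlgebra Q) :
    contractLeft (QuadraticMap.associated (R := K) Q v) x
      = (2 : K)⁻¹ • (ι Q v * x - involute x * ι Q v) := by
  induction x using CliffordAlgebra.left_induction with
  | algebraMap r =>
    rw [contractLeft_algebraMap, AlgHom.commutes, ← Algebra.commutes r (ι Q v), sub_self,
      smul_zero]
  | add x₁ x₂ h₁ h₂ =>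
    rw [map_add, h₁, h₂, map_add, ← smul_add]
    congr 1
    simp only [mul_add, add_mul]
    abel
  | ι_mul x m h =>
    rw [contractLeft_ι_mul, h, assoc_apply, map_mul, involute_ι]
    simp only [neg_mul]
    rw [sub_neg_eq_add, ← mul_assoc, ι_mul_ι_comm, sub_mul,
      ← Algebra.smul_def, ← smul_smul, mul_smul_comm, ← smul_sub]
    congr 1
    simp only [mul_sub, ← mul_assoc]
    abel

theorem wedgeVec_eq (v : V) (x : CliffordAlgebra Q) :
    wedgeVec Q v x = ι Q v * x - contractLeft (QuadraticMap.associated (R := K) Q v) x := by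
  have key : (2 : K)⁻¹ + (2 : K)⁻¹ = 1 := by
    have two_ne : (2 : K) ≠ 0 := Invertible.ne_zero 2
    field_simp
    norm_num
  rw [contract_assoc, wedgeVec, smul_add, smul_sub, eq_sub_iff_add_eq]
  have h1 : (2 : K)⁻¹ • (ι Q v * x) + (2 : K)⁻¹ • (involute x * ι Q v) +
      ((2 : K)⁻¹ • (ι Q v * x) - (2 : K)⁻¹ • (involute x * ι Q v)) =
      ((2 : K)⁻¹ + (2 : K)⁻¹) • (ι Q v * x) := by
    rw [add_smul]; abel
  rw [h1, key, one_smul]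

end Char

theorem involute_wedgeVec (v : V) (x : CliffordAlgebra Q) :
    involute (wedgeVec Q v x) = - wedgeVec Q v (involute x) := by
  simp only [wedgeVec, map_smul, map_add, map_mul, involute_ι, involute_involute,
    neg_mul, mul_neg, ← smul_neg]
  congr 1
  abel

theorem involute_wedgeList (l : List V) :
    involute (wedgeList Q l) = ((-1 : K) ^ l.length) • wedgeList Q l := by
  induction l with
  | nil => simp [wedgeList_nil]
  | cons a l ih =>
    rw [wedgeList_cons, involute_wedgeVec, ih, ← wedgeVecL_apply, map_smul,
      List.length_cons, pow_succ, wedgeVecL_apply, ← neg_smul]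
    ring_nf

theorem contract_wedgeVec (d : Module.Dual K V) [Invertible (2 : K)] (v : V)
    (x : CliffordAlgebra Q) :
    contractLeft d (wedgeVec Q v x) = d v • x - wedgeVec Q v (contractLeft d x) := by
  rw [wedgeVec_eq, map_sub, contractLeft_ι_mul, contractLeft_comm, wedgeVec_eq]
  abel

theorem ofFn_reverse : ∀ (n : ℕ) (f : Fin n → V),
    (List.ofFn f).reverse = List.ofFn (fun i => f (Fin.rev i)) := by
  intro n
  induction n with
  | zero => intro f; simp
  | succ n ih =>
    intro f
    rw [List.ofFn_succ' f, List.concat_eq_append, List.reverse_append, ih]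
    simp only [List.reverse_cons, List.reverse_nil, List.nil_append, List.singleton_append]
    conv_rhs => rw [List.ofFn_succ]
    simp [Fin.rev_succ, Fin.rev_zero]

section Blade

variable [Invertible (2 : K)]

theorem contract_blade (d : Module.Dual K V) : ∀ (n : ℕ) (w : Fin (n + 1) → V),
    contractLeft d (wedgeList Q (List.ofFn w)) =
      ∑ i : Fin (n + 1), ((-1 : K) ^ (i : ℕ) * d (w i)) •
        wedgeList Q (List.ofFn (w ∘ i.succAbove)) := by
  intro n
  induction n with
  | zero =>
    intro w
    simp only [List.ofFn_succ, List.ofFn_zero, wedgeList_cons, wedgeList_nil]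
    rw [contract_wedgeVec, contractLeft_one, ← wedgeVecL_apply, map_zero, sub_zero,
      Fin.sum_univ_one]
    simp [List.ofFn_zero, wedgeList_nil]
  | succ n ih =>
    intro w
    have hcons : ∀ i : Fin (n + 1),
        List.ofFn (w ∘ (Fin.succ i).succAbove) =
          w 0 :: List.ofFn ((fun j : Fin (n + 1) => w j.succ) ∘ i.succAbove) := by
      intro i
      rw [List.ofFn_succ]
      congr 1
      · exact congrArg List.ofFn (funext fun j => by
          simp [Function.comp, Fin.succ_succAbove_succ])
    have h0 : List.ofFn (w ∘ (0 : Fin (n + 2)).succAbove)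
        = List.ofFn (fun i : Fin (n + 1) => w i.succ) := by
      exact congrArg List.ofFn (funext fun j => by simp [Function.comp, Fin.zero_succAbove])
    rw [List.ofFn_succ, wedgeList_cons, contract_wedgeVec, ih (fun i => w i.succ),
      ← wedgeVecL_apply, map_sum]
    conv_rhs => rw [Fin.sum_univ_succ]
    rw [h0]
    simp only [Fin.val_zero, pow_zero, one_mul, Function.comp_apply]
    rw [sub_eq_add_neg]
    congr 1
    rw [← Finset.sum_neg_distrib]
    apply Finset.sum_congr rfl
    intro i _
    rw [map_smul, wedgeVecL_apply, hcons i, wedgeList_cons, ← neg_smul]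
    congr 1
    rw [Fin.val_succ, pow_succ]
    ring

theorem involute_blade (l : List V) :
    involute (wedgeList Q l) = ((-1 : K) ^ l.length) • wedgeList Q l :=
  involute_wedgeList Q l

theorem scalarPart_add (x y : CliffordAlgebra Q) :
    scalarPart Q (x + y) = scalarPart Q x + scalarPart Q y := by
  simp [scalarPart, map_add]

theorem scalarPart_sub (x y : CliffordAlgebra Q) :
    scalarPart Q (x - y) = scalarPart Q x - scalarPart Q y := by
  simp [scalarPart, map_sub]

theorem scalarPart_smul (r : K) (x : CliffordAlgebra Q) :
    scalarPart Q (r • x) = r * scalarPart Q x := by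
  simp [scalarPart, map_smul, smul_eq_mul]

theorem scalarPart_sum {ι : Type*} (s : Finset ι) (f : ι → CliffordAlgebra Q) :
    scalarPart Q (∑ i ∈ s, f i) = ∑ i ∈ s, scalarPart Q (f i) := by
  simp [scalarPart, map_sum]

theorem scalarPart_one : scalarPart Q (1 : CliffordAlgebra Q) = 1 := by
  have h : (CliffordAlgebra.equivExterior Q) (1 : CliffordAlgebra Q)
      = changeForm changeForm.associated_neg_proof (1 : CliffordAlgebra Q) := rfl
  rw [scalarPart, h, changeForm_one, map_one]

theorem scalarPart_ι_mul (v : V) (x : CliffordAlgebra Q) :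
    scalarPart Q (ι Q v * x) =
      scalarPart Q (contractLeft (QuadraticMap.associated (R := K) Q v) x) := by
  have h : ∀ y : CliffordAlgebra Q, (CliffordAlgebra.equivExterior Q) y
      = changeForm changeForm.associated_neg_proof y := fun _ => rfl
  rw [scalarPart, scalarPart, h, h, changeForm_ι_mul, ← changeForm_contractLeft]
  have hB : QuadraticMap.associated (R := K) (-Q) v = - QuadraticMap.associated (R := K) Q v := by
    have : QuadraticMap.associated (R := K) (-Q) = - QuadraticMap.associated (R := K) Q :=
      map_neg (QuadraticMap.associatedHom K) Q
    rw [this, LinearMap.neg_apply]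
  have hneg : CliffordAlgebra.contractLeft (Q := Q) (-(QuadraticMap.associated (R := K) Q v))
      = -(CliffordAlgebra.contractLeft (Q := Q) (QuadraticMap.associated (R := K) Q v)) :=
    map_neg _ _
  have hι : ExteriorAlgebra.algebraMapInv
      (CliffordAlgebra.ι (0 : QuadraticForm K V) v) = 0 := by
    have := ExteriorAlgebra.lift_ι_apply K (0 : V →ₗ[K] K) (fun _ => by simp) v
    simpa [ExteriorAlgebra.algebraMapInv] using this
  rw [hB, hneg]
  simp only [LinearMap.neg_apply, map_neg, sub_neg_eq_add, map_add, map_mul, hι,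
    zero_mul, zero_add]

theorem sign_helper (n : ℕ) (i : Fin (n + 1)) :
    ((-1 : K) ^ n) * (-1 : K) ^ (i : ℕ) = (-1 : K) ^ ((Fin.rev i : Fin (n + 1)) : ℕ) := by
  have hle : (i : ℕ) ≤ n := Nat.lt_succ_iff.mp i.isLt
  have hval : ((Fin.rev i : Fin (n + 1)) : ℕ) = n - (i : ℕ) := by
    rw [Fin.val_rev]
    omega
  have key : (-1 : K) ^ (n - (i : ℕ)) * (-1 : K) ^ (i : ℕ) = (-1 : K) ^ n := by
    rw [← pow_add, Nat.sub_add_cancel hle]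
  have h2 : (-1 : K) ^ (i : ℕ) * (-1 : K) ^ (i : ℕ) = 1 := by
    rw [← pow_add, ← two_mul, pow_mul]
    norm_num
  rw [hval, ← key, mul_assoc, h2, mul_one]

theorem main : ∀ (k : ℕ) (u v : Fin k → V),
    scalarPart Q (wedgeList Q (List.ofFn u) * wedgeList Q (List.ofFn v).reverse) =
      Matrix.det (Matrix.of fun i j : Fin k =>
        (2 : K)⁻¹ * QuadraticMap.polar Q (u i) (v j)) := by
  intro k
  induction k with
  | zero =>
    intro u v
    simp only [List.ofFn_zero, List.reverse_nil, wedgeList_nil, one_mul, scalarPart_one]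
    rw [Matrix.det_fin_zero]
  | succ n ih =>
    intro u v
    have hrev : (List.ofFn v).reverse = List.ofFn (fun i => v (Fin.rev i)) :=
      ofFn_reverse _ v
    rw [hrev, List.ofFn_succ (f := u), wedgeList_cons, wedgeVec_eq, sub_mul,
      scalarPart_sub, mul_assoc, scalarPart_ι_mul, contract_mul, scalarPart_add,
      add_sub_cancel_left]
    have hAc : involute (wedgeList Q (List.ofFn fun i : Fin n => u i.succ))
        = ((-1 : K) ^ n) • wedgeList Q (List.ofFn fun i : Fin n => u i.succ) := by
      rw [involute_wedgeList, List.length_ofFn]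
    have hcC := contract_blade Q (QuadraticMap.associated (R := K) Q (u 0)) n
      (fun i => v (Fin.rev i))
    rw [hAc, hcC, smul_mul_assoc, scalarPart_smul, Finset.mul_sum]
    simp only [mul_smul_comm, scalarPart_smul, scalarPart_sum]
    have hterm : ∀ i : Fin (n + 1),
        scalarPart Q (wedgeList Q (List.ofFn fun i : Fin n => u i.succ) *
            wedgeList Q (List.ofFn ((fun j : Fin (n + 1) => v (Fin.rev j)) ∘ i.succAbove)))
          = Matrix.det (Matrix.of fun a b : Fin n =>
              (2 : K)⁻¹ * QuadraticMap.polar Q (u a.succ) (v ((Fin.rev i).succAbove b))) := by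
      intro i
      have hl : List.ofFn ((fun j : Fin (n + 1) => v (Fin.rev j)) ∘ i.succAbove)
          = (List.ofFn (fun b : Fin n => v ((Fin.rev i).succAbove b))).reverse := by
        rw [ofFn_reverse]
        exact congrArg List.ofFn (funext fun j => by
          simp only [Function.comp_apply]
          rw [Fin.rev_succAbove])
      rw [hl]
      exact ih (fun a => u a.succ) (fun b => v ((Fin.rev i).succAbove b))
    simp only [hterm, assoc_apply]
    rw [Matrix.det_succ_row_zero, Finset.mul_sum]
    apply Fintype.sum_bijective Fin.rev Fin.rev_bijective
    intro i
    have hsub : (Matrix.of fun a b : Fin (n + 1) =>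
          (2 : K)⁻¹ * QuadraticMap.polar Q (u a) (v b)).submatrix Fin.succ (Fin.rev i).succAbove
        = Matrix.of (fun a b : Fin n =>
            (2 : K)⁻¹ * QuadraticMap.polar Q (u a.succ) (v ((Fin.rev i).succAbove b))) := by
      ext a b
      simp [Matrix.submatrix_apply]
    rw [hsub, Matrix.of_apply, ← sign_helper n i]
    ring

end Blade

end BladeDet

set_option linter.unusedSectionVars true

/-- For 1-vectors `u_1,…,u_k` and `v_1,…,v_k` in a Clifford algebra, the scalar product
of the blades satisfies
`(u_1 ∧ ⋯ ∧ u_k) ∗ (v_k ∧ ⋯ ∧ v_1) = det [u_i ∗ v_j]`,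
where `x ∗ y = ⟨xy⟩₀` and `u ∗ v = β_q(u,v)` for vectors. -/
theorem blade_scalar_product_det (Q : QuadraticForm K V) [Invertible (2 : K)]
    {k : ℕ} (u v : Fin k → V) :
    scalarPart Q (wedgeList Q (List.ofFn u) * wedgeList Q (List.ofFn v).reverse) =
      Matrix.det (Matrix.of fun i j : Fin k =>
        (2 : K)⁻¹ * QuadraticMap.polar Q (u i) (v j)) :=
  BladeDet.main Q k u v
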